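/- arXiv:1207.3885 — 8 statements merged into one kernel-verified Lean document; each statement's English description precedes it below -/
import Mathlib

section
/- Let (X, d_X) and (Y, d_Y) be metric spaces and let C : X ⇉ Y be a correspondence with distortion at most ε. If a finite subset σ ⊆ X admits an a-centre (a point x̄ ∈ X with d_X(x̄, x) ≤ a for all x ∈ σ), then every finite subset of C(σ) admits an (a+ε)-centre in Y. In other words, C is ε-simplicial from the intrinsic Čech filtration of X to that of Y. -/
/-- The image of a set under a multivalued map (relation) `C : X ⇉ Y`. -/
def mvImage {X Y : Type*} (C : Set (X × Y)) (s : Set X) : Set Y :=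
  {y | ∃ x ∈ s, (x, y) ∈ C}

theorem stmt4 {X Y : Type*} [MetricSpace X] [MetricSpace Y] (C : Set (X × Y)) (ε : ℝ)
    (hX : ∀ x : X, ∃ y : Y, (x, y) ∈ C) (hY : ∀ y : Y, ∃ x : X, (x, y) ∈ C)
    (hdis : ∀ x x' y y', (x, y) ∈ C → (x', y') ∈ C → |dist x x' - dist y y'| ≤ ε) :
    ∀ (a : ℝ) (σ : Finset X), σ.Nonempty → (∃ xbar : X, ∀ x ∈ σ, dist xbar x ≤ a) →
      ∀ τ : Finset Y, ↑τ ⊆ mvImage C ↑σ →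
        ∃ ybar : Y, ∀ y ∈ τ, dist ybar y ≤ a + ε := by
  intro a σ hσ ⟨xbar, hxbar⟩ τ hτ
  obtain ⟨ybar, hyb⟩ := hX xbar
  refine ⟨ybar, fun y hy => ?_⟩
  obtain ⟨x, hx, hxy⟩ := hτ hy
  have h := hdis xbar x ybar y hyb hxy
  have := abs_le.mp h
  linarith [hxbar x hx, this.1]
end

section
/- Let L, W, L', W' be sets with functions Λ : L × W → ℝ and Λ' : L' × W' → ℝ, and let C : L ⇉ L', D : W ⇉ W' be correspondences with dis(C,D) ≤ ε. If a finite subset σ ⊆ L has a point w ∈ W with Λ(l,w) ≤ a for all l ∈ σ, then every finite subset σ' ⊆ C(σ) has a point w' ∈ W' with Λ'(l',w') ≤ a + ε for all l' ∈ σ'. That is, C is ε-simplicial from the Dowker filtration of Λ to the Dowker filtration of Λ'. -/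
theorem stmt5 {L W L' W' : Type*} (Λ : L → W → ℝ) (Λ' : L' → W' → ℝ)
    (C : Set (L × L')) (D : Set (W × W')) (ε : ℝ)
    (hC1 : ∀ l : L, ∃ l' : L', (l, l') ∈ C) (hC2 : ∀ l' : L', ∃ l : L, (l, l') ∈ C)
    (hD1 : ∀ w : W, ∃ w' : W', (w, w') ∈ D) (hD2 : ∀ w' : W', ∃ w : W, (w, w') ∈ D)
    (hdis : ∀ l l' w w', (l, l') ∈ C → (w, w') ∈ D → |Λ l w - Λ' l' w'| ≤ ε) :
    ∀ (a : ℝ) (σ : Finset L) (w : W), (∀ l ∈ σ, Λ l w ≤ a) →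
      ∀ σ' : Finset L', ↑σ' ⊆ mvImage C ↑σ →
        ∃ w' : W', ∀ l' ∈ σ', Λ' l' w' ≤ a + ε := by
  intro a σ w hw σ' hσ'
  obtain ⟨w', hw'⟩ := hD1 w
  refine ⟨w', fun l' hl' => ?_⟩
  obtain ⟨l, hl, hlC⟩ := hσ' hl'
  have h := hdis l l' w w' hlC hw'
  have := abs_le.mp h
  have := hw l hl
  linarith [this]
end

section
/- Let L, L', W be subsets of a metric space with Hausdorff distance d_H(L,L') < ε. If a finite subset σ ⊆ L has a point w ∈ W with d(l,w) ≤ a for all l ∈ σ, then there exists a finite subset σ' ⊆ L' with d(l', w) ≤ a + ε for all l' ∈ σ', obtained by replacing each l ∈ σ by some l' ∈ L' with d(l,l') < ε; consequently the ambient Čech filtrations Čech(L,W) and Čech(L',W) admit ε-simplicial correspondences in both directions. -/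
theorem stmt6 {Z : Type*} [MetricSpace Z] (L L' W : Set Z) (ε : ℝ)
    (h1 : ∀ l ∈ L, ∃ l' ∈ L', dist l l' < ε) (h2 : ∀ l' ∈ L', ∃ l ∈ L, dist l l' < ε) :
    ∀ (a : ℝ) (σ : Finset Z), ↑σ ⊆ L → ∀ w ∈ W, (∀ l ∈ σ, dist l w ≤ a) →
      ∃ σ' : Finset Z, ↑σ' ⊆ L' ∧ (∀ l' ∈ σ', dist l' w ≤ a + ε) ∧
        (∀ l ∈ σ, ∃ l' ∈ σ', dist l l' < ε) ∧ (∀ l' ∈ σ', ∃ l ∈ σ, dist l l' < ε) := by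
  intro a σ hσ w hw hdist
  classical
  have hchoice : ∀ l ∈ σ, ∃ l' ∈ L', dist l l' < ε := fun l hl => h1 l (hσ hl)
  choose f hfL hfd using hchoice
  refine ⟨σ.attach.image (fun l => f l.1 l.2), ?_, ?_, ?_, ?_⟩
  · intro x hx
    simp only [Finset.coe_image, Set.mem_image, Finset.mem_coe, Finset.mem_attach] at hx
    obtain ⟨l, _, rfl⟩ := hx
    exact hfL l.1 l.2
  · intro l' hl'
    simp only [Finset.mem_image, Finset.mem_attach, true_and] at hl'
    obtain ⟨l, rfl⟩ := hl'
    calc dist (f l.1 l.2) w ≤ dist (f l.1 l.2) l.1 + dist l.1 w := dist_triangle _ _ _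
      _ ≤ ε + a := add_le_add (by rw [dist_comm]; exact (hfd l.1 l.2).le) (hdist l.1 l.2)
      _ = a + ε := add_comm _ _
  · intro l hl
    exact ⟨f l hl, Finset.mem_image.2 ⟨⟨l, hl⟩, Finset.mem_attach _ _, rfl⟩, hfd l hl⟩
  · intro l' hl'
    simp only [Finset.mem_image, Finset.mem_attach, true_and] at hl'
    obtain ⟨l, rfl⟩ := hl'
    exact ⟨l.1, l.2, hfd l.1 l.2⟩
end

section
/- Let L be a set, W and W' two witness sets with functions Λ : L × W → ℝ and Λ' : L × W' → ℝ, and C : W ⇉ W' a correspondence with distortion at most ε/2. If w ∈ W is an a-witness for a finite subset τ ⊆ L, then any w' ∈ C(w) is an (a+ε)-witness for τ. Consequently, every simplex of Wit(L,W;a) belongs to Wit(L,W';a+ε). -/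
/-- `w` is an `a`-witness for the finite set of landmarks `τ ⊆ L`, with respect to the
function `Λ : L × W → ℝ`. -/
def IsWitness {L W : Type*} (Λ : L → W → ℝ) (a : ℝ) (w : W) (τ : Finset L) : Prop :=
  ∀ l ∈ τ, ∀ l' : L, l' ∉ τ → Λ l w ≤ Λ l' w + a

theorem stmt7 {L W W' : Type*} (Λ : L → W → ℝ) (Λ' : L → W' → ℝ)
    (C : Set (W × W')) (ε : ℝ)
    (hC1 : ∀ w : W, ∃ w' : W', (w, w') ∈ C) (hC2 : ∀ w' : W', ∃ w : W, (w, w') ∈ C)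
    (hdis : ∀ (l : L) (w : W) (w' : W'), (w, w') ∈ C → |Λ l w - Λ' l w'| ≤ ε / 2) :
    (∀ (a : ℝ) (τ : Finset L) (w : W), IsWitness Λ a w τ →
        ∀ w' : W', (w, w') ∈ C → IsWitness Λ' (a + ε) w' τ) ∧
    (∀ (a : ℝ) (σ : Finset L), (∀ τ ⊆ σ, ∃ w : W, IsWitness Λ a w τ) →
        ∀ τ ⊆ σ, ∃ w' : W', IsWitness Λ' (a + ε) w' τ) := by
  have main : ∀ (a : ℝ) (τ : Finset L) (w : W), IsWitness Λ a w τ →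
      ∀ w' : W', (w, w') ∈ C → IsWitness Λ' (a + ε) w' τ := by
    intro a τ w hw w' hww' l hl l' hl'
    have h1 := abs_le.1 (hdis l w w' hww')
    have h2 := abs_le.1 (hdis l' w w' hww')
    have := hw l hl l' hl'
    linarith [h1.1, h1.2, h2.1, h2.2]
  refine ⟨main, fun a σ h τ hτ => ?_⟩
  obtain ⟨w, hw⟩ := h τ hτ
  obtain ⟨w', hw'⟩ := hC1 w
  exact ⟨w', main a τ w hw w' hw'⟩
end

section
/- There exist metric spaces that witness the instability of witness complexes under landmark perturbation: on the real line take W = L = {0,1} and L' = {−δ, 0, 1, 1+δ} for 0 < δ < 1/2. Then [0,1] is a simplex of Wit(L,W;a) for all a ≥ 0, but [0,1] is not a simplex of Wit(L',W;a) for any a ∈ [δ, 1−δ), even though the Hausdorff distance d_H(L,L') = δ. -/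
/-- `w` is an `a`-witness for `τ` relative to the landmark set `L ⊆ ℝ`:
`|l - w| ≤ |l' - w| + a` for all `l ∈ τ` and `l' ∈ L \ τ`. -/
def IsWitR (L : Set ℝ) (a w : ℝ) (τ : Set ℝ) : Prop :=
  ∀ l ∈ τ, ∀ l' ∈ L \ τ, |l - w| ≤ |l' - w| + a

/-- `σ` is a simplex of the witness complex `Wit(L, W; a)` on the real line:
`σ ⊆ L` and every subset of `σ` admits an `a`-witness in `W`. -/
def InWit (L W : Set ℝ) (a : ℝ) (σ : Set ℝ) : Prop :=
  σ ⊆ L ∧ ∀ τ ⊆ σ, ∃ w ∈ W, IsWitR L a w τ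

theorem stmt8 (δ : ℝ) (hδ : 0 < δ) (hδ' : δ < 1 / 2) :
    (∀ a : ℝ, 0 ≤ a → InWit {0, 1} {0, 1} a {0, 1}) ∧
    (∀ a : ℝ, δ ≤ a → a < 1 - δ → ¬ InWit {-δ, 0, 1, 1 + δ} {0, 1} a {0, 1}) ∧
    Metric.hausdorffDist ({0, 1} : Set ℝ) {-δ, 0, 1, 1 + δ} = δ := by
  refine ⟨?_, ?_, ?_⟩
  · intro a ha
    refine ⟨subset_rfl, fun τ hτ => ?_⟩
    by_cases h1 : (1 : ℝ) ∈ τ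
    · refine ⟨1, by simp, fun l hl l' hl' => ?_⟩
      rcases hτ hl with rfl | rfl
      · rcases hl'.1 with rfl | rfl
        · simp [abs_of_nonpos]; linarith
        · exact absurd h1 hl'.2
      · simp; linarith [abs_nonneg (l' - 1)]
    · refine ⟨0, by simp, fun l hl l' hl' => ?_⟩
      rcases hτ hl with rfl | rfl
      · simp; positivity
      · exact absurd hl h1
  · intro a ha ha' ⟨hsub, hwit⟩
    obtain ⟨w, hw, hIW⟩ := hwit {0, 1} subset_rfl
    have hδ1 : -δ ∈ ({-δ, 0, 1, 1 + δ} : Set ℝ) \ {0, 1} := by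
      constructor
      · simp
      · simp only [Set.mem_insert_iff, Set.mem_singleton_iff]
        push_neg; constructor <;> intro h <;> linarith
    have hδ2 : 1 + δ ∈ ({-δ, 0, 1, 1 + δ} : Set ℝ) \ {0, 1} := by
      constructor
      · simp
      · simp only [Set.mem_insert_iff, Set.mem_singleton_iff]
        push_neg; constructor <;> intro h <;> linarith
    rcases hw with rfl | rfl
    · have := hIW 1 (by simp) (-δ) hδ1
      rw [abs_of_nonneg (by norm_num), abs_of_nonpos (by linarith)] at this
      linarith
    · have := hIW 0 (by simp) (1 + δ) hδ2
      rw [abs_of_nonpos (by norm_num), abs_of_nonneg (by linarith)] at this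
      linarith
  · have hfin : EMetric.hausdorffEdist ({0, 1} : Set ℝ) {-δ, 0, 1, 1 + δ} ≠ ⊤ := by
      apply Metric.hausdorffEdist_ne_top_of_nonempty_of_bounded
      · exact ⟨0, by simp⟩
      · exact ⟨-δ, by simp⟩
      · exact (Set.toFinite _).isBounded
      · exact (Set.toFinite _).isBounded
    refine le_antisymm ?_ ?_
    · apply Metric.hausdorffDist_le_of_mem_dist hδ.le
      · intro x hx
        exact ⟨x, by rcases hx with rfl | rfl <;> simp, by simp [hδ.le]⟩
      · intro x hx
        rcases hx with rfl | rfl | rfl | rfl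
        · exact ⟨0, by simp, by rw [Real.dist_eq, abs_of_nonpos (by linarith)]; linarith⟩
        · exact ⟨0, by simp, by simp [hδ.le]⟩
        · exact ⟨1, by simp, by simp [hδ.le]⟩
        · exact ⟨1, by simp, by rw [Real.dist_eq, abs_of_nonneg (by linarith)]; linarith⟩
    · have h1 : δ ≤ Metric.infDist (-δ) ({0, 1} : Set ℝ) := by
        by_contra h
        push_neg at h
        rw [Metric.infDist_lt_iff ⟨0, by simp⟩] at h
        obtain ⟨y, hy, hlt⟩ := h
        rcases hy with rfl | rfl <;> rw [Real.dist_eq] at hlt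
        · rw [abs_of_nonpos (by linarith)] at hlt; linarith
        · rw [abs_of_nonpos (by linarith)] at hlt; linarith
      calc δ ≤ Metric.infDist (-δ) ({0, 1} : Set ℝ) := h1
        _ ≤ Metric.hausdorffDist ({-δ, 0, 1, 1 + δ} : Set ℝ) {0, 1} :=
            Metric.infDist_le_hausdorffDist_of_mem (by simp)
              (by rwa [EMetric.hausdorffEdist_comm])
        _ = _ := Metric.hausdorffDist_comm
end

section
/- Let (X, d_X) be a path metric space (so that for any x, x' ∈ X and ε > 0 there exists z ∈ X with max(d(x,z), d(x',z)) ≤ d(x,x')/2 + ε) and let q > 0. Then the map on first homology H₁(Rips(X, (2/3)q)) → H₁(Rips(X,q)) induced by inclusion is surjective. -/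
/-- The simplicial boundary operator on formal `𝕜`-linear combinations of
`(n+1)`-tuples of vertices of `X`. -/
noncomputable def bdry (𝕜 : Type*) [Field 𝕜] (X : Type*) (n : ℕ) :
    ((Fin (n + 1) → X) →₀ 𝕜) →ₗ[𝕜] ((Fin n → X) →₀ 𝕜) :=
  Finsupp.lift ((Fin n → X) →₀ 𝕜) 𝕜 (Fin (n + 1) → X) fun σ =>
    ∑ i : Fin (n + 1), ((-1 : 𝕜) ^ (i : ℕ)) • Finsupp.single (σ ∘ i.succAbove) 1

/-- The subspace of chains supported on tuples satisfying `K` (the simplices of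
a simplicial complex, given as a predicate on tuples of vertices). -/
noncomputable def chainsIn (𝕜 : Type*) [Field 𝕜] {X : Type*} (n : ℕ)
    (K : (Fin n → X) → Prop) : Submodule 𝕜 ((Fin n → X) →₀ 𝕜) :=
  Submodule.span 𝕜 {c | ∃ σ, K σ ∧ c = Finsupp.single σ (1 : 𝕜)}

/-- The chain map induced by a vertex map `f : X → Y`. -/
noncomputable def pushChain (𝕜 : Type*) [Field 𝕜] {X Y : Type*} (n : ℕ) (f : X → Y) :
    ((Fin n → X) →₀ 𝕜) →ₗ[𝕜] ((Fin n → Y) →₀ 𝕜) :=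
  Finsupp.lmapDomain 𝕜 𝕜 fun σ : Fin n → X => f ∘ σ

lemma compS2 {X : Type*} (σ : Fin 2 → X) : σ ∘ Fin.succ = ![σ 1] := by
  funext i; fin_cases i; rfl
lemma comp1 {X : Type*} (σ : Fin 2 → X) : σ ∘ (1:Fin 2).succAbove = ![σ 0] := by
  funext i; fin_cases i; rfl
lemma compS3 {X : Type*} (σ : Fin 3 → X) : σ ∘ Fin.succ = ![σ 1, σ 2] := by
  funext i; fin_cases i <;> rfl
lemma comp31 {X : Type*} (σ : Fin 3 → X) : σ ∘ (1:Fin 3).succAbove = ![σ 0, σ 2] := by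
  funext i; fin_cases i <;> rfl
lemma comp32 {X : Type*} (σ : Fin 3 → X) : σ ∘ (2:Fin 3).succAbove = ![σ 0, σ 1] := by
  funext i; fin_cases i <;> rfl

lemma bdry1_single (𝕜 : Type*) [Field 𝕜] {X : Type*} (σ : Fin 2 → X) :
    bdry 𝕜 X 1 (Finsupp.single σ 1) = Finsupp.single ![σ 1] 1 - Finsupp.single ![σ 0] 1 := by
  simp [bdry, Finsupp.lift_apply, Finsupp.sum_single_index, Fin.sum_univ_two, compS2, comp1]
  abel

lemma bdry2_single (𝕜 : Type*) [Field 𝕜] {X : Type*} (σ : Fin 3 → X) :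
    bdry 𝕜 X 2 (Finsupp.single σ 1) =
      Finsupp.single ![σ 1, σ 2] 1 - Finsupp.single ![σ 0, σ 2] 1 + Finsupp.single ![σ 0, σ 1] 1 := by
  simp [bdry, Finsupp.lift_apply, Finsupp.sum_single_index, Fin.sum_univ_three, compS3, comp31, comp32]
  abel

theorem stmt13 (𝕜 : Type*) [Field 𝕜] {X : Type*} [MetricSpace X]
    -- path metric space: approximate midpoints exist
    (hpath : ∀ (x x' : X) (ε : ℝ), 0 < ε →
      ∃ z : X, max (dist x z) (dist x' z) ≤ dist x x' / 2 + ε)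
    (q : ℝ) (hq : 0 < q)
    -- surjectivity of H₁(Rips(X, (2/3)q)) → H₁(Rips(X, q)): every 1-cycle of
    -- Rips(X, q) is homologous in Rips(X, q) to a 1-cycle of Rips(X, (2/3)q)
    (c : (Fin 2 → X) →₀ 𝕜)
    (hc : c ∈ chainsIn 𝕜 2 (fun σ : Fin 2 → X => ∀ i j, dist (σ i) (σ j) ≤ q))
    (hcyc : bdry 𝕜 X 1 c = 0) :
    ∃ c' ∈ chainsIn 𝕜 2 (fun σ : Fin 2 → X => ∀ i j, dist (σ i) (σ j) ≤ 2 / 3 * q),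
      bdry 𝕜 X 1 c' = 0 ∧
      ∃ b ∈ chainsIn 𝕜 3 (fun σ : Fin 3 → X => ∀ i j, dist (σ i) (σ j) ≤ q),
        c - c' = bdry 𝕜 X 2 b := by
  have hε : (0:ℝ) < q / 6 := by linarith
  choose z hz using fun x x' => hpath x x' (q/6) hε
  have hz1 : ∀ x x', dist x (z x x') ≤ dist x x' / 2 + q / 6 :=
    fun x x' => le_trans (le_max_left _ _) (hz x x')
  have hz2 : ∀ x x', dist x' (z x x') ≤ dist x x' / 2 + q / 6 :=
    fun x x' => le_trans (le_max_right _ _) (hz x x')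
  -- subdivision and triangle maps
  set sub : ((Fin 2 → X) →₀ 𝕜) →ₗ[𝕜] ((Fin 2 → X) →₀ 𝕜) :=
    Finsupp.lift ((Fin 2 → X) →₀ 𝕜) 𝕜 (Fin 2 → X) (fun σ =>
      Finsupp.single ![σ 0, z (σ 0) (σ 1)] 1 + Finsupp.single ![z (σ 0) (σ 1), σ 1] 1) with hsub
  set tri : ((Fin 2 → X) →₀ 𝕜) →ₗ[𝕜] ((Fin 3 → X) →₀ 𝕜) :=
    Finsupp.lift ((Fin 3 → X) →₀ 𝕜) 𝕜 (Fin 2 → X) (fun σ =>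
      Finsupp.single ![σ 0, z (σ 0) (σ 1), σ 1] 1) with htri
  have hsub_single : ∀ σ : Fin 2 → X, sub (Finsupp.single σ 1) =
      Finsupp.single ![σ 0, z (σ 0) (σ 1)] 1 + Finsupp.single ![z (σ 0) (σ 1), σ 1] 1 := by
    intro σ; simp [hsub, Finsupp.lift_apply, Finsupp.sum_single_index]
  have htri_single : ∀ σ : Fin 2 → X, tri (Finsupp.single σ 1) =
      Finsupp.single ![σ 0, z (σ 0) (σ 1), σ 1] 1 := by
    intro σ; simp [htri, Finsupp.lift_apply, Finsupp.sum_single_index]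
  -- the two chain-level identities, as linear map identities
  have key1 : (bdry 𝕜 X 1).comp sub = bdry 𝕜 X 1 := by
    apply Finsupp.lhom_ext'
    intro σ
    ext
    simp only [LinearMap.comp_apply, Finsupp.lsingle_apply, hsub_single, map_add,
      bdry1_single]
    simp [Matrix.cons_val_zero, Matrix.cons_val_one]
  have key2 : LinearMap.id - sub = (bdry 𝕜 X 2).comp (-tri) := by
    apply Finsupp.lhom_ext'
    intro σ
    ext
    simp only [LinearMap.comp_apply, LinearMap.sub_apply, LinearMap.neg_apply,
      LinearMap.id_apply, Finsupp.lsingle_apply, hsub_single, htri_single, map_neg,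
      bdry2_single]
    simp [Matrix.cons_val_zero, Matrix.cons_val_one]
    have hσ : ![σ 0, σ 1] = σ := by funext i; fin_cases i <;> rfl
    rw [hσ]
    abel
  -- memberships
  have hmem2 : sub c ∈ chainsIn 𝕜 2 (fun σ : Fin 2 → X => ∀ i j, dist (σ i) (σ j) ≤ 2/3*q) := by
    refine Submodule.span_induction ?_ ?_ ?_ ?_ hc
    · rintro x ⟨σ, hσ, rfl⟩
      rw [hsub_single]
      have hd : dist (σ 0) (σ 1) ≤ q := hσ 0 1
      have h1 : dist (σ 0) (z (σ 0) (σ 1)) ≤ 2/3*q := by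
        have := hz1 (σ 0) (σ 1); linarith
      have h2 : dist (σ 1) (z (σ 0) (σ 1)) ≤ 2/3*q := by
        have := hz2 (σ 0) (σ 1); linarith
      apply Submodule.add_mem
      · apply Submodule.subset_span
        refine ⟨![σ 0, z (σ 0) (σ 1)], ?_, rfl⟩
        intro i j
        fin_cases i <;> fin_cases j <;>
          simp [dist_comm] <;> linarith
      · apply Submodule.subset_span
        refine ⟨![z (σ 0) (σ 1), σ 1], ?_, rfl⟩
        intro i j
        fin_cases i <;> fin_cases j <;>
          simp [dist_comm] <;> linarith
    · simp
    · intro x y _ _ hx hy; rw [map_add]; exact Submodule.add_mem _ hx hy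
    · intro a x _ hx; rw [map_smul]; exact Submodule.smul_mem _ a hx
  have hmem3 : -(tri c) ∈ chainsIn 𝕜 3 (fun σ : Fin 3 → X => ∀ i j, dist (σ i) (σ j) ≤ q) := by
    apply Submodule.neg_mem
    refine Submodule.span_induction ?_ ?_ ?_ ?_ hc
    · rintro x ⟨σ, hσ, rfl⟩
      rw [htri_single]
      have hd : dist (σ 0) (σ 1) ≤ q := hσ 0 1
      have h1 : dist (σ 0) (z (σ 0) (σ 1)) ≤ q := by
        have := hz1 (σ 0) (σ 1); linarith
      have h2 : dist (σ 1) (z (σ 0) (σ 1)) ≤ q := by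
        have := hz2 (σ 0) (σ 1); linarith
      apply Submodule.subset_span
      refine ⟨![σ 0, z (σ 0) (σ 1), σ 1], ?_, rfl⟩
      intro i j
      fin_cases i <;> fin_cases j <;>
        simp [dist_comm] <;> linarith
    · simp
    · intro x y _ _ hx hy; rw [map_add]; exact Submodule.add_mem _ hx hy
    · intro a x _ hx; rw [map_smul]; exact Submodule.smul_mem _ a hx
  refine ⟨sub c, hmem2, ?_, -(tri c), hmem3, ?_⟩
  · have := congrArg (fun f => f c) key1
    simpa [hcyc] using this
  · have := congrArg (fun f => f c) key2
    simpa using this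
end

section
/- Let X be a geodesic δ-hyperbolic space and x, y, z ∈ X with pairwise distances a = d(y,z), b = d(z,x), c = d(x,y), all at most q, and a ≤ b ≤ c. Let ℓ, m, n be midpoints of geodesics [y,z], [z,x], [x,y] respectively. Then d(ℓ,m) ≤ q/2 + δ, d(ℓ,n) ≤ q/2 + δ, and d(m,n) ≤ q/2 + δ. -/
/-- `g` parametrises a minimising geodesic from `x` to `y` (by arc length on
`[0, dist x y]`). -/
def IsGeodesicFrom {X : Type*} [MetricSpace X] (g : ℝ → X) (x y : X) : Prop :=
  g 0 = x ∧ g (dist x y) = y ∧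
    ∀ s ∈ Set.Icc 0 (dist x y), ∀ t ∈ Set.Icc 0 (dist x y), dist (g s) (g t) = |s - t|

theorem stmt16 {X : Type*} [MetricSpace X] (δ q : ℝ) (hδ : 0 ≤ δ)
    (x y z : X) (gxy gyz gzx : ℝ → X)
    (hxy : IsGeodesicFrom gxy x y) (hyz : IsGeodesicFrom gyz y z)
    (hzx : IsGeodesicFrom gzx z x)
    (a b c : ℝ) (ha : a = dist y z) (hb : b = dist z x) (hc : c = dist x y)
    (hab : a ≤ b) (hbc : b ≤ c) (hcq : c ≤ q)
    -- δ-hyperbolicity of the triangle: along the two sides adjacent to each vertex,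
    -- equidistant points (up to the Gromov product) are at distance at most δ
    (thin1 : ∀ t ∈ Set.Icc 0 ((b + c - a) / 2), dist (gxy t) (gzx (b - t)) ≤ δ)
    (thin2 : ∀ t ∈ Set.Icc 0 ((c + a - b) / 2), dist (gyz t) (gxy (c - t)) ≤ δ)
    (thin3 : ∀ t ∈ Set.Icc 0 ((a + b - c) / 2), dist (gzx t) (gyz (a - t)) ≤ δ) :
    dist (gyz (a / 2)) (gzx (b / 2)) ≤ q / 2 + δ ∧
    dist (gyz (a / 2)) (gxy (c / 2)) ≤ q / 2 + δ ∧
    dist (gzx (b / 2)) (gxy (c / 2)) ≤ q / 2 + δ := by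
  have ha0 : 0 ≤ a := ha ▸ dist_nonneg
  have hb0 : 0 ≤ b := hb ▸ dist_nonneg
  have hc0 : 0 ≤ c := hc ▸ dist_nonneg
  have htri : c ≤ b + a := by
    rw [ha, hb, hc, dist_comm z x, dist_comm y z]
    exact dist_triangle x z y
  have dyz := hyz.2.2
  rw [← ha] at dyz
  have dxy := hxy.2.2
  rw [← hc] at dxy
  have dzx := hzx.2.2
  rw [← hb] at dzx
  refine ⟨?_, ?_, ?_⟩
  · -- ℓ and m
    have h3 := thin3 ((a + b - c) / 2) ⟨by linarith, le_refl _⟩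
    have e1 : dist (gyz (a / 2)) (gyz (a - (a + b - c) / 2)) = (c - b) / 2 := by
      rw [dyz (a / 2) ⟨by linarith, by linarith⟩ (a - (a + b - c) / 2)
        ⟨by linarith, by linarith⟩, abs_of_nonpos (by linarith)]
      ring
    have e2 : dist (gzx ((a + b - c) / 2)) (gzx (b / 2)) = (c - a) / 2 := by
      rw [dzx ((a + b - c) / 2) ⟨by linarith, by linarith⟩ (b / 2)
        ⟨by linarith, by linarith⟩, abs_of_nonpos (by linarith)]
      ring
    calc dist (gyz (a / 2)) (gzx (b / 2))
        ≤ dist (gyz (a / 2)) (gyz (a - (a + b - c) / 2)) +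
            dist (gyz (a - (a + b - c) / 2)) (gzx ((a + b - c) / 2)) +
            dist (gzx ((a + b - c) / 2)) (gzx (b / 2)) := dist_triangle4 _ _ _ _
      _ ≤ (c - b) / 2 + δ + (c - a) / 2 := by
          rw [e1, e2, dist_comm (gyz _)]; linarith
      _ ≤ q / 2 + δ := by linarith
  · -- ℓ and n
    have h2 := thin2 (a / 2) ⟨by linarith, by linarith⟩
    have e1 : dist (gxy (c - a / 2)) (gxy (c / 2)) = (c - a) / 2 := by
      rw [dxy (c - a / 2) ⟨by linarith, by linarith⟩ (c / 2)
        ⟨by linarith, by linarith⟩, abs_of_nonneg (by linarith)]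
      ring
    calc dist (gyz (a / 2)) (gxy (c / 2))
        ≤ dist (gyz (a / 2)) (gxy (c - a / 2)) + dist (gxy (c - a / 2)) (gxy (c / 2)) :=
          dist_triangle _ _ _
      _ ≤ δ + (c - a) / 2 := by rw [e1]; linarith
      _ ≤ q / 2 + δ := by linarith
  · -- m and n
    have h1 := thin1 (c / 2) ⟨by linarith, by linarith⟩
    have e1 : dist (gzx (b - c / 2)) (gzx (b / 2)) = (c - b) / 2 := by
      rw [dzx (b - c / 2) ⟨by linarith, by linarith⟩ (b / 2)
        ⟨by linarith, by linarith⟩, abs_of_nonpos (by linarith)]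
      ring
    calc dist (gzx (b / 2)) (gxy (c / 2))
        ≤ dist (gzx (b / 2)) (gzx (b - c / 2)) + dist (gzx (b - c / 2)) (gxy (c / 2)) :=
          dist_triangle _ _ _
      _ ≤ (c - b) / 2 + δ := by
          rw [dist_comm (gzx (b / 2)), e1, dist_comm (gzx _)]; linarith
      _ ≤ q / 2 + δ := by linarith
end

section
/- Let (X,d) be a δ-hyperbolic geodesic space and q > p > 2δ. Then the inclusion-induced map H₂(Rips(X,p)) → H₂(Rips(X,q)) on second simplicial homology of Vietoris–Rips complexes is surjective. -/
namespace Stmt18Aux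

section metric
variable {X : Type*} [MetricSpace X] {δ : ℝ}
variable {geod : X → X → ℝ → X}

noncomputable def midp (geod : X → X → ℝ → X) (u v : X) : X := geod u v (dist u v / 2)

lemma half_mem {u v : X} : dist u v / 2 ∈ Set.Icc 0 (dist u v) := by
  constructor <;> [positivity; linarith [dist_nonneg (x := u) (y := v)]]

lemma dist_mid_left (hg : ∀ x y, IsGeodesicFrom (geod x y) x y) (u v : X) :
    dist u (midp geod u v) = dist u v / 2 := by
  obtain ⟨h0, h1, h2⟩ := hg u v
  have := h2 0 ⟨le_refl 0, dist_nonneg⟩ (dist u v / 2) half_mem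
  rw [h0] at this
  rw [midp, this]
  rw [abs_of_nonpos (by linarith [dist_nonneg (x := u) (y := v)])]; ring

lemma dist_mid_right (hg : ∀ x y, IsGeodesicFrom (geod x y) x y) (u v : X) :
    dist (midp geod u v) v = dist u v / 2 := by
  obtain ⟨h0, h1, h2⟩ := hg u v
  have := h2 (dist u v / 2) half_mem (dist u v) ⟨dist_nonneg, le_refl _⟩
  rw [h1] at this
  rw [midp, this, abs_of_nonpos (by linarith [dist_nonneg (x := u) (y := v)])]; ring

lemma median (hg : ∀ x y, IsGeodesicFrom (geod x y) x y)
    (hhyp : ∀ (x y z : X) (gxy gyz gzx : ℝ → X),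
      IsGeodesicFrom gxy x y → IsGeodesicFrom gyz y z → IsGeodesicFrom gzx z x →
        (∀ t ∈ Set.Icc 0 ((dist z x + dist x y - dist y z) / 2),
            dist (gxy t) (gzx (dist z x - t)) ≤ δ) ∧
        (∀ t ∈ Set.Icc 0 ((dist x y + dist y z - dist z x) / 2),
            dist (gyz t) (gxy (dist x y - t)) ≤ δ) ∧
        (∀ t ∈ Set.Icc 0 ((dist y z + dist z x - dist x y) / 2),
            dist (gzx t) (gyz (dist y z - t)) ≤ δ))
    (x y z : X) :
    dist x (midp geod y z) ≤ δ + max (dist x y) (dist x z) - dist y z / 2 := by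
  obtain ⟨-, h2, h3⟩ := hhyp x y z (geod x y) (geod y z) (geod z x)
    (hg x y) (hg y z) (hg z x)
  set a := dist y z with ha
  have haxy : a ≤ dist x y + dist x z := by
    rw [ha]; have := dist_triangle y x z; rwa [dist_comm y x] at this
  rcases le_total (dist x z) (dist x y) with hbc | hbc
  · -- use branch 2
    have hmem : a / 2 ∈ Set.Icc 0 ((dist x y + dist y z - dist z x) / 2) := by
      constructor
      · positivity
      · rw [dist_comm z x]; rw [← ha]; linarith
    have hδ2 := h2 (a / 2) hmem
    obtain ⟨g0, g1, gp⟩ := hg x y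
    have hxg : dist x (geod x y (dist x y - a/2)) = dist x y - a/2 := by
      have h1 := gp 0 ⟨le_refl 0, dist_nonneg⟩ (dist x y - a/2)
        ⟨by linarith, by linarith [dist_nonneg (x := y) (y := z)]⟩
      rw [g0] at h1
      rw [h1, abs_of_nonpos (by linarith)]; ring
    have := dist_triangle x (geod x y (dist x y - a/2)) (midp geod y z)
    have hm : dist (geod x y (dist x y - a/2)) (midp geod y z) ≤ δ := by
      rw [midp, ← ha, dist_comm]; exact hδ2
    calc dist x (midp geod y z) ≤ _ := this
    _ ≤ (dist x y - a/2) + δ := by rw [hxg]; linarith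
    _ ≤ δ + max (dist x y) (dist x z) - a / 2 := by
        rw [max_eq_left hbc]; linarith
  · -- use branch 3
    have hmem : a / 2 ∈ Set.Icc 0 ((dist y z + dist z x - dist x y) / 2) := by
      constructor
      · positivity
      · rw [dist_comm z x, ← ha]; linarith
    have hδ3 := h3 (a / 2) hmem
    have hrw : dist y z - a/2 = a/2 := by rw [← ha]; ring
    rw [hrw] at hδ3
    obtain ⟨g0, g1, gp⟩ := hg z x
    have hxg : dist x (geod z x (a/2)) = dist z x - a/2 := by
      have h1 := gp (dist z x) ⟨dist_nonneg, le_refl _⟩ (a/2)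
        ⟨by positivity, by rw [dist_comm z x]; linarith⟩
      rw [g1] at h1
      rw [h1, abs_of_nonneg (by rw [dist_comm z x]; linarith)]
    have := dist_triangle x (geod z x (a/2)) (midp geod y z)
    have hm : dist (geod z x (a/2)) (midp geod y z) ≤ δ := by
      rw [midp, ← ha]; exact hδ3
    calc dist x (midp geod y z) ≤ _ := this
    _ ≤ (dist z x - a/2) + δ := by rw [hxg]; linarith
    _ ≤ δ + max (dist x y) (dist x z) - a / 2 := by
        rw [max_eq_right hbc, dist_comm z x]; linarith
end metric

end Stmt18Aux

namespace Stmt18Aux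

section algebra

variable (𝕜 : Type*) [Field 𝕜] {X : Type*}

lemma bdry_single {n : ℕ} (τ : Fin (n+1) → X) :
    bdry 𝕜 X n (Finsupp.single τ 1) =
      ∑ i : Fin (n+1), ((-1 : 𝕜) ^ (i : ℕ)) • Finsupp.single (τ ∘ i.succAbove) 1 := by
  simp [bdry, Finsupp.lift_apply, Finsupp.sum_single_index]

lemma comp30 (a b c d : X) : ![a,b,c,d] ∘ (0 : Fin 4).succAbove = ![b,c,d] := by
  funext i; fin_cases i <;> rfl
lemma comp31 (a b c d : X) : ![a,b,c,d] ∘ (1 : Fin 4).succAbove = ![a,c,d] := by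
  funext i; fin_cases i <;> rfl
lemma comp32 (a b c d : X) : ![a,b,c,d] ∘ (2 : Fin 4).succAbove = ![a,b,d] := by
  funext i; fin_cases i <;> rfl
lemma comp33 (a b c d : X) : ![a,b,c,d] ∘ (3 : Fin 4).succAbove = ![a,b,c] := by
  funext i; fin_cases i <;> rfl

lemma bdry3_single (a b c d : X) :
    bdry 𝕜 X 3 (Finsupp.single ![a,b,c,d] 1) =
      Finsupp.single ![b,c,d] 1 - Finsupp.single ![a,c,d] 1
        + Finsupp.single ![a,b,d] 1 - Finsupp.single ![a,b,c] 1 := by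
  rw [bdry_single, Fin.sum_univ_four, comp30, comp31, comp32, comp33]
  norm_num [show ((0:Fin 4):ℕ) = 0 from rfl, show ((1:Fin 4):ℕ) = 1 from rfl,
    show ((2:Fin 4):ℕ) = 2 from rfl, show ((3:Fin 4):ℕ) = 3 from rfl]
  abel

lemma comp20 (a b c : X) : ![a,b,c] ∘ (0 : Fin 3).succAbove = ![b,c] := by
  funext i; fin_cases i <;> rfl
lemma comp21 (a b c : X) : ![a,b,c] ∘ (1 : Fin 3).succAbove = ![a,c] := by
  funext i; fin_cases i <;> rfl
lemma comp22 (a b c : X) : ![a,b,c] ∘ (2 : Fin 3).succAbove = ![a,b] := by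
  funext i; fin_cases i <;> rfl

lemma bdry2_single (a b c : X) :
    bdry 𝕜 X 2 (Finsupp.single ![a,b,c] 1) =
      Finsupp.single ![b,c] 1 - Finsupp.single ![a,c] 1 + Finsupp.single ![a,b] 1 := by
  rw [bdry_single, Fin.sum_univ_three, comp20, comp21, comp22]
  norm_num [show ((0:Fin 3):ℕ) = 0 from rfl, show ((1:Fin 3):ℕ) = 1 from rfl,
    show ((2:Fin 3):ℕ) = 2 from rfl]
  abel

lemma eta3 (σ : Fin 3 → X) : σ = ![σ 0, σ 1, σ 2] := by
  funext i; fin_cases i <;> rfl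
lemma eta4 (σ : Fin 4 → X) : σ = ![σ 0, σ 1, σ 2, σ 3] := by
  funext i; fin_cases i <;> rfl

lemma bdry_bdry (B : (Fin 4 → X) →₀ 𝕜) : bdry 𝕜 X 2 (bdry 𝕜 X 3 B) = 0 := by
  induction B using Finsupp.induction_linear with
  | zero => simp
  | add f g hf hg => rw [map_add, map_add, hf, hg, add_zero]
  | single τ k =>
      have h1 : Finsupp.single τ k = k • Finsupp.single τ (1:𝕜) := by
        rw [Finsupp.smul_single', mul_one]
      rw [h1, map_smul, map_smul, eta4 τ, bdry3_single]
      rw [map_sub, map_add, map_sub, bdry2_single, bdry2_single, bdry2_single, bdry2_single]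
      rw [show (0 : (Fin 2 → X) →₀ 𝕜) = k • 0 from (smul_zero k).symm]
      congr 1
      abel

lemma single_mem_chainsIn {n : ℕ} {K : (Fin n → X) → Prop} {σ : Fin n → X} (h : K σ) :
    Finsupp.single σ (1:𝕜) ∈ chainsIn 𝕜 n K :=
  Submodule.subset_span ⟨σ, h, rfl⟩

lemma chainsIn_mono {n : ℕ} {K K' : (Fin n → X) → Prop} (h : ∀ σ, K σ → K' σ) :
    chainsIn 𝕜 n K ≤ chainsIn 𝕜 n K' :=
  Submodule.span_mono (by rintro c ⟨σ, hσ, rfl⟩; exact ⟨σ, h σ hσ, rfl⟩)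

end algebra

section mems

variable (𝕜 : Type*) [Field 𝕜] {X : Type*} [MetricSpace X]

lemma K3 {r : ℝ} (hr : 0 ≤ r) {a b c : X}
    (h1 : dist a b ≤ r) (h2 : dist a c ≤ r) (h3 : dist b c ≤ r) :
    ∀ i j : Fin 3, dist (![a,b,c] i) (![a,b,c] j) ≤ r := by
  intro i j
  fin_cases i <;> fin_cases j <;>
    simp only [Matrix.cons_val_zero, Matrix.cons_val_one, Matrix.head_cons,
      Matrix.cons_val_two, Matrix.tail_cons, dist_self] <;>
    first
      | exact hr | assumption
      | (rw [dist_comm]; assumption)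

lemma K4 {r : ℝ} (hr : 0 ≤ r) {a b c d : X}
    (h1 : dist a b ≤ r) (h2 : dist a c ≤ r) (h3 : dist a d ≤ r)
    (h4 : dist b c ≤ r) (h5 : dist b d ≤ r) (h6 : dist c d ≤ r) :
    ∀ i j : Fin 4, dist (![a,b,c,d] i) (![a,b,c,d] j) ≤ r := by
  intro i j
  fin_cases i <;> fin_cases j <;>
    simp only [Matrix.cons_val_zero, Matrix.cons_val_one, Matrix.head_cons,
      Matrix.cons_val_two, Matrix.tail_cons, Matrix.cons_val_three, dist_self] <;>
    first
      | exact hr | assumption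
      | (rw [dist_comm]; assumption)

end mems

end Stmt18Aux

namespace Stmt18Aux

section ops

variable (𝕜 : Type*) [Field 𝕜] {X : Type*} [MetricSpace X]

noncomputable def flatF (mid : X → X → X) (s : ℝ) :
    ((Fin 2 → X) →₀ 𝕜) →ₗ[𝕜] ((Fin 3 → X) →₀ 𝕜) :=
  Finsupp.lift _ 𝕜 _ fun e =>
    if s < dist (e 0) (e 1) then -(Finsupp.single ![e 0, mid (e 0) (e 1), e 1] (1:𝕜)) else 0

noncomputable def fillT (mid : X → X → X) (s : ℝ) (σ : Fin 3 → X) : (Fin 4 → X) →₀ 𝕜 :=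
  (if s < dist (σ 1) (σ 2) then Finsupp.single ![σ 0, σ 1, mid (σ 1) (σ 2), σ 2] (1:𝕜) else 0)
  + (if s < dist (σ 0) (σ 2) then
      (if s < dist (σ 1) (σ 2) then
        -(Finsupp.single ![σ 0, mid (σ 0) (σ 2), mid (σ 1) (σ 2), σ 2] (1:𝕜))
       else -(Finsupp.single ![σ 0, mid (σ 0) (σ 2), σ 1, σ 2] (1:𝕜))) else 0)
  + (if s < dist (σ 0) (σ 1) then
      (if s < dist (σ 1) (σ 2) then
        -(Finsupp.single ![σ 0, mid (σ 0) (σ 1), σ 1, mid (σ 1) (σ 2)] (1:𝕜))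
       else if s < dist (σ 0) (σ 2) then
        Finsupp.single ![σ 0, mid (σ 0) (σ 1), mid (σ 0) (σ 2), σ 1] (1:𝕜)
       else -(Finsupp.single ![σ 0, mid (σ 0) (σ 1), σ 1, σ 2] (1:𝕜))) else 0)

noncomputable def fillF (mid : X → X → X) (s : ℝ) :
    ((Fin 3 → X) →₀ 𝕜) →ₗ[𝕜] ((Fin 4 → X) →₀ 𝕜) :=
  Finsupp.lift _ 𝕜 _ (fillT 𝕜 mid s)

lemma flatF_single (mid : X → X → X) (s : ℝ) (u v : X) :
    flatF 𝕜 mid s (Finsupp.single ![u,v] 1) =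
      if s < dist u v then -(Finsupp.single ![u, mid u v, v] (1:𝕜)) else 0 := by
  have : flatF 𝕜 mid s (Finsupp.single ![u,v] 1)
      = (1:𝕜) • (if s < dist (![u,v] 0) (![u,v] 1) then
          -(Finsupp.single ![![u,v] 0, mid (![u,v] 0) (![u,v] 1), ![u,v] 1] (1:𝕜)) else 0) := by
    rw [flatF, Finsupp.lift_apply, Finsupp.sum_single_index]
    rw [zero_smul]
  rw [this, one_smul]
  rfl

lemma fillF_single (mid : X → X → X) (s : ℝ) (σ : Fin 3 → X) :
    fillF 𝕜 mid s (Finsupp.single σ 1) = fillT 𝕜 mid s σ := by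
  rw [fillF, Finsupp.lift_apply, Finsupp.sum_single_index, one_smul]
  rw [zero_smul]

lemma fillT_eval (mid : X → X → X) (s : ℝ) (x y z : X) :
    fillT 𝕜 mid s ![x,y,z] =
      (if s < dist y z then Finsupp.single ![x, y, mid y z, z] (1:𝕜) else 0)
      + (if s < dist x z then
          (if s < dist y z then -(Finsupp.single ![x, mid x z, mid y z, z] (1:𝕜))
           else -(Finsupp.single ![x, mid x z, y, z] (1:𝕜))) else 0)
      + (if s < dist x y then
          (if s < dist y z then -(Finsupp.single ![x, mid x y, y, mid y z] (1:𝕜))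
           else if s < dist x z then Finsupp.single ![x, mid x y, mid x z, y] (1:𝕜)
           else -(Finsupp.single ![x, mid x y, y, z] (1:𝕜))) else 0) := rfl

end ops

end Stmt18Aux

namespace Stmt18Aux
section basis
variable {𝕜 : Type*} [Field 𝕜] {X : Type*} [MetricSpace X]

set_option maxHeartbeats 2000000 in
lemma basis_round (mid : X → X → X) (δ t : ℝ)
    (hml : ∀ u v : X, dist u (mid u v) = dist u v / 2)
    (hmr : ∀ u v : X, dist (mid u v) v = dist u v / 2)
    (hmed : ∀ x y z : X, dist x (mid y z) ≤ δ + max (dist x y) (dist x z) - dist y z / 2)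
    (hδ : 0 ≤ δ) (h2δ : 2*δ ≤ t)
    (x y z : X) (hxy : dist x y ≤ t) (hxz : dist x z ≤ t) (hyz : dist y z ≤ t) :
    (Finsupp.single ![x,y,z] (1:𝕜)
        - flatF 𝕜 mid (δ + t/2) (bdry 𝕜 X 2 (Finsupp.single ![x,y,z] 1))
        - bdry 𝕜 X 3 (fillF 𝕜 mid (δ + t/2) (Finsupp.single ![x,y,z] 1))
      ∈ chainsIn 𝕜 3 (fun τ : Fin 3 → X => ∀ i j, dist (τ i) (τ j) ≤ δ/2 + 3*t/4))
    ∧ fillF 𝕜 mid (δ + t/2) (Finsupp.single ![x,y,z] 1)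
      ∈ chainsIn 𝕜 4 (fun τ : Fin 4 → X => ∀ i j, dist (τ i) (τ j) ≤ t) := by
  have ht0 : (0:ℝ) ≤ t := by linarith
  have hht0 : (0:ℝ) ≤ δ/2 + 3*t/4 := by linarith
  have hsh : δ + t/2 ≤ δ/2 + 3*t/4 := by linarith
  have hht : δ/2 + 3*t/4 ≤ t := by linarith
  have hym1 : dist y (mid y z) = dist y z / 2 := hml y z
  have hm1z : dist (mid y z) z = dist y z / 2 := hmr y z
  have hxm2 : dist x (mid x z) = dist x z / 2 := hml x z
  have hm2z : dist (mid x z) z = dist x z / 2 := hmr x z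
  have hxm3 : dist x (mid x y) = dist x y / 2 := hml x y
  have hm3y : dist (mid x y) y = dist x y / 2 := hmr x y
  have hflat : flatF 𝕜 mid (δ + t/2) (bdry 𝕜 X 2 (Finsupp.single ![x,y,z] 1)) =
      (if δ + t/2 < dist y z then -(Finsupp.single ![y, mid y z, z] (1:𝕜)) else 0)
      - (if δ + t/2 < dist x z then -(Finsupp.single ![x, mid x z, z] (1:𝕜)) else 0)
      + (if δ + t/2 < dist x y then -(Finsupp.single ![x, mid x y, y] (1:𝕜)) else 0) := by
    rw [bdry2_single, map_add, map_sub, flatF_single, flatF_single, flatF_single]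
  have hfill : fillF 𝕜 mid (δ + t/2) (Finsupp.single ![x,y,z] 1) = fillT 𝕜 mid (δ + t/2) ![x,y,z] :=
    fillF_single 𝕜 mid _ _
  rw [fillT_eval] at hfill
  by_cases hA : δ + t/2 < dist y z
  · have he1 : dist x (mid y z) ≤ δ/2 + 3*t/4 := by
      have h0 := hmed x y z
      have hmax : max (dist x y) (dist x z) ≤ t := max_le hxy hxz
      linarith
    by_cases hB : δ + t/2 < dist x z
    · have hm2m1 : dist (mid x z) (mid y z) ≤ δ/2 + 3*t/4 := by
        rw [dist_comm]
        have h0 := hmed (mid y z) x z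
        have hmax : max (dist (mid y z) x) (dist (mid y z) z) ≤ δ/2 + 3*t/4 :=
          max_le (by rw [dist_comm]; exact he1) (by rw [hm1z]; linarith)
        linarith
      by_cases hC : δ + t/2 < dist x y
      · -- case A B C
        have hm3m1 : dist (mid x y) (mid y z) ≤ δ/2 + 3*t/4 := by
          rw [dist_comm]
          have h0 := hmed (mid y z) x y
          have hmax : max (dist (mid y z) x) (dist (mid y z) y) ≤ δ/2 + 3*t/4 :=
            max_le (by rw [dist_comm]; exact he1) (by rw [dist_comm]; rw [hym1]; linarith)
          linarith
        simp only [if_pos hA, if_pos hB, if_pos hC, add_zero, zero_add] at hflat hfill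
        constructor
        · have hR : Finsupp.single ![mid x y, y, mid y z] (1:𝕜)
              + Finsupp.single ![x, mid x y, mid y z] 1
              + Finsupp.single ![mid x z, mid y z, z] 1
              - Finsupp.single ![x, mid x z, mid y z] 1
              ∈ chainsIn 𝕜 3 (fun τ : Fin 3 → X => ∀ i j, dist (τ i) (τ j) ≤ δ/2 + 3*t/4) := by
            refine sub_mem (add_mem (add_mem ?_ ?_) ?_) ?_ <;>
              exact single_mem_chainsIn _
                (K3 hht0 (by linarith) (by linarith) (by linarith))
          convert hR using 1
          rw [hflat, hfill]
          simp only [map_add, map_neg, bdry3_single]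
          abel
        · rw [hfill]
          refine add_mem (add_mem ?_ (neg_mem ?_)) (neg_mem ?_) <;>
            exact single_mem_chainsIn _
              (K4 ht0 (by linarith) (by linarith) (by linarith) (by linarith)
                (by linarith) (by linarith))
      · -- case A B ¬C
        have hxys : dist x y ≤ δ + t/2 := le_of_not_gt hC
        simp only [if_pos hA, if_pos hB, if_neg hC, add_zero, zero_add] at hflat hfill
        constructor
        · have hR : Finsupp.single ![x, y, mid y z] (1:𝕜)
              + Finsupp.single ![mid x z, mid y z, z] 1
              - Finsupp.single ![x, mid x z, mid y z] 1
              ∈ chainsIn 𝕜 3 (fun τ : Fin 3 → X => ∀ i j, dist (τ i) (τ j) ≤ δ/2 + 3*t/4) := by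
            refine sub_mem (add_mem ?_ ?_) ?_ <;>
              exact single_mem_chainsIn _
                (K3 hht0 (by linarith) (by linarith) (by linarith))
          convert hR using 1
          rw [hflat, hfill]
          simp only [map_add, map_neg, bdry3_single, add_zero]
          abel
        · rw [hfill]
          refine add_mem ?_ (neg_mem ?_) <;>
            exact single_mem_chainsIn _
              (K4 ht0 (by linarith) (by linarith) (by linarith) (by linarith)
                (by linarith) (by linarith))
    · have hxzs : dist x z ≤ δ + t/2 := le_of_not_gt hB
      by_cases hC : δ + t/2 < dist x y
      · -- case A ¬B C
        have hm3m1 : dist (mid x y) (mid y z) ≤ δ/2 + 3*t/4 := by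
          rw [dist_comm]
          have h0 := hmed (mid y z) x y
          have hmax : max (dist (mid y z) x) (dist (mid y z) y) ≤ δ/2 + 3*t/4 :=
            max_le (by rw [dist_comm]; exact he1) (by rw [dist_comm]; rw [hym1]; linarith)
          linarith
        simp only [if_pos hA, if_neg hB, if_pos hC, add_zero, zero_add] at hflat hfill
        constructor
        · have hR : Finsupp.single ![x, mid y z, z] (1:𝕜)
              + Finsupp.single ![mid x y, y, mid y z] 1
              + Finsupp.single ![x, mid x y, mid y z] 1
              ∈ chainsIn 𝕜 3 (fun τ : Fin 3 → X => ∀ i j, dist (τ i) (τ j) ≤ δ/2 + 3*t/4) := by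
            refine add_mem (add_mem ?_ ?_) ?_ <;>
              exact single_mem_chainsIn _
                (K3 hht0 (by linarith) (by linarith) (by linarith))
          convert hR using 1
          rw [hflat, hfill]
          simp only [map_add, map_neg, bdry3_single, add_zero, zero_add]
          abel
        · rw [hfill]
          refine add_mem ?_ (neg_mem ?_) <;>
            exact single_mem_chainsIn _
              (K4 ht0 (by linarith) (by linarith) (by linarith) (by linarith)
                (by linarith) (by linarith))
      · -- case A ¬B ¬C
        have hxys : dist x y ≤ δ + t/2 := le_of_not_gt hC
        simp only [if_pos hA, if_neg hB, if_neg hC, add_zero, zero_add] at hflat hfill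
        constructor
        · have hR : Finsupp.single ![x, y, mid y z] (1:𝕜)
              + Finsupp.single ![x, mid y z, z] 1
              ∈ chainsIn 𝕜 3 (fun τ : Fin 3 → X => ∀ i j, dist (τ i) (τ j) ≤ δ/2 + 3*t/4) := by
            refine add_mem ?_ ?_ <;>
              exact single_mem_chainsIn _
                (K3 hht0 (by linarith) (by linarith) (by linarith))
          convert hR using 1
          rw [hflat, hfill]
          simp only [map_add, map_neg, bdry3_single, add_zero]
          abel
        · rw [hfill]
          exact single_mem_chainsIn _
            (K4 ht0 (by linarith) (by linarith) (by linarith) (by linarith)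
              (by linarith) (by linarith))
  · have hyzs : dist y z ≤ δ + t/2 := le_of_not_gt hA
    by_cases hB : δ + t/2 < dist x z
    · have hm2y : dist (mid x z) y ≤ δ/2 + 3*t/4 := by
        rw [dist_comm]
        have h0 := hmed y x z
        have hmax : max (dist y x) (dist y z) ≤ t :=
          max_le (by rw [dist_comm]; exact hxy) hyz
        linarith
      by_cases hC : δ + t/2 < dist x y
      · -- case ¬A B C
        have hm3m2 : dist (mid x y) (mid x z) ≤ δ/2 + 3*t/4 := by
          rw [dist_comm]
          have h0 := hmed (mid x z) x y
          have hmax : max (dist (mid x z) x) (dist (mid x z) y) ≤ δ/2 + 3*t/4 :=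
            max_le (by rw [dist_comm]; rw [hxm2]; linarith) hm2y
          linarith
        simp only [if_neg hA, if_pos hB, if_pos hC, add_zero, zero_add] at hflat hfill
        constructor
        · have hR : Finsupp.single ![mid x z, y, z] (1:𝕜)
              - Finsupp.single ![mid x y, mid x z, y] 1
              + Finsupp.single ![x, mid x y, mid x z] 1
              ∈ chainsIn 𝕜 3 (fun τ : Fin 3 → X => ∀ i j, dist (τ i) (τ j) ≤ δ/2 + 3*t/4) := by
            refine add_mem (sub_mem ?_ ?_) ?_ <;>
              exact single_mem_chainsIn _
                (K3 hht0 (by linarith) (by linarith) (by linarith))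
          convert hR using 1
          rw [hflat, hfill]
          simp only [map_add, map_neg, bdry3_single, zero_add]
          abel
        · rw [hfill]
          refine add_mem (neg_mem ?_) ?_ <;>
            exact single_mem_chainsIn _
              (K4 ht0 (by linarith) (by linarith) (by linarith) (by linarith)
                (by linarith) (by linarith))
      · -- case ¬A B ¬C
        have hxys : dist x y ≤ δ + t/2 := le_of_not_gt hC
        simp only [if_neg hA, if_pos hB, if_neg hC, add_zero, zero_add] at hflat hfill
        constructor
        · have hR : Finsupp.single ![mid x z, y, z] (1:𝕜)
              - Finsupp.single ![x, mid x z, y] 1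
              ∈ chainsIn 𝕜 3 (fun τ : Fin 3 → X => ∀ i j, dist (τ i) (τ j) ≤ δ/2 + 3*t/4) := by
            refine sub_mem ?_ ?_ <;>
              exact single_mem_chainsIn _
                (K3 hht0 (by linarith) (by linarith) (by linarith))
          convert hR using 1
          rw [hflat, hfill]
          simp only [map_add, map_neg, bdry3_single, zero_add, add_zero]
          abel
        · rw [hfill]
          refine neg_mem ?_
          exact single_mem_chainsIn _
            (K4 ht0 (by linarith) (by linarith) (by linarith) (by linarith)
              (by linarith) (by linarith))
    · have hxzs : dist x z ≤ δ + t/2 := le_of_not_gt hB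
      by_cases hC : δ + t/2 < dist x y
      · -- case ¬A ¬B C
        have hm3z : dist (mid x y) z ≤ δ/2 + 3*t/4 := by
          rw [dist_comm]
          have h0 := hmed z x y
          have hmax : max (dist z x) (dist z y) ≤ t :=
            max_le (by rw [dist_comm]; exact hxz) (by rw [dist_comm]; exact hyz)
          linarith
        simp only [if_neg hA, if_neg hB, if_pos hC, add_zero, zero_add] at hflat hfill
        constructor
        · have hR : Finsupp.single ![mid x y, y, z] (1:𝕜)
              + Finsupp.single ![x, mid x y, z] 1
              ∈ chainsIn 𝕜 3 (fun τ : Fin 3 → X => ∀ i j, dist (τ i) (τ j) ≤ δ/2 + 3*t/4) := by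
            refine add_mem ?_ ?_ <;>
              exact single_mem_chainsIn _
                (K3 hht0 (by linarith) (by linarith) (by linarith))
          convert hR using 1
          rw [hflat, hfill]
          simp only [map_add, map_neg, bdry3_single, zero_add, add_zero]
          abel
        · rw [hfill]
          refine neg_mem ?_
          exact single_mem_chainsIn _
            (K4 ht0 (by linarith) (by linarith) (by linarith) (by linarith)
              (by linarith) (by linarith))
      · -- case ¬A ¬B ¬C
        have hxys : dist x y ≤ δ + t/2 := le_of_not_gt hC
        simp only [if_neg hA, if_neg hB, if_neg hC, add_zero, zero_add] at hflat hfill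
        constructor
        · have hR : Finsupp.single ![x, y, z] (1:𝕜)
              ∈ chainsIn 𝕜 3 (fun τ : Fin 3 → X => ∀ i j, dist (τ i) (τ j) ≤ δ/2 + 3*t/4) :=
            single_mem_chainsIn _
              (K3 hht0 (by linarith) (by linarith) (by linarith))
          convert hR using 1
          rw [hflat, hfill]
          simp
        · rw [hfill]
          exact zero_mem _
end basis
end Stmt18Aux

namespace Stmt18Aux
section glue
variable {𝕜 : Type*} [Field 𝕜] {X : Type*} [MetricSpace X]

lemma round_chain (mid : X → X → X) (δ t : ℝ)
    (hml : ∀ u v : X, dist u (mid u v) = dist u v / 2)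
    (hmr : ∀ u v : X, dist (mid u v) v = dist u v / 2)
    (hmed : ∀ x y z : X, dist x (mid y z) ≤ δ + max (dist x y) (dist x z) - dist y z / 2)
    (hδ : 0 ≤ δ) (h2δ : 2*δ ≤ t)
    (c : (Fin 3 → X) →₀ 𝕜)
    (hc : c ∈ chainsIn 𝕜 3 (fun τ : Fin 3 → X => ∀ i j, dist (τ i) (τ j) ≤ t)) :
    (c - flatF 𝕜 mid (δ + t/2) (bdry 𝕜 X 2 c) - bdry 𝕜 X 3 (fillF 𝕜 mid (δ + t/2) c)
        ∈ chainsIn 𝕜 3 (fun τ : Fin 3 → X => ∀ i j, dist (τ i) (τ j) ≤ δ/2 + 3*t/4))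
    ∧ fillF 𝕜 mid (δ + t/2) c
        ∈ chainsIn 𝕜 4 (fun τ : Fin 4 → X => ∀ i j, dist (τ i) (τ j) ≤ t) := by
  refine Submodule.span_induction ?_ ?_ ?_ ?_ hc
  · rintro c' ⟨σ, hσ, rfl⟩
    rw [eta3 σ]
    exact basis_round mid δ t hml hmr hmed hδ h2δ (σ 0) (σ 1) (σ 2)
      (hσ 0 1) (hσ 0 2) (hσ 1 2)
  · constructor
    · simp only [map_zero, sub_zero]; exact zero_mem _
    · simp only [map_zero]; exact zero_mem _
  · intro u v _ _ hu hv
    constructor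
    · have e : (u + v) - flatF 𝕜 mid (δ + t/2) (bdry 𝕜 X 2 (u + v))
          - bdry 𝕜 X 3 (fillF 𝕜 mid (δ + t/2) (u + v))
          = (u - flatF 𝕜 mid (δ + t/2) (bdry 𝕜 X 2 u) - bdry 𝕜 X 3 (fillF 𝕜 mid (δ + t/2) u))
            + (v - flatF 𝕜 mid (δ + t/2) (bdry 𝕜 X 2 v)
                - bdry 𝕜 X 3 (fillF 𝕜 mid (δ + t/2) v)) := by
        simp only [map_add]; abel
      rw [e]; exact add_mem hu.1 hv.1
    · rw [map_add]; exact add_mem hu.2 hv.2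
  · intro a u _ hu
    constructor
    · have e : (a • u) - flatF 𝕜 mid (δ + t/2) (bdry 𝕜 X 2 (a • u))
          - bdry 𝕜 X 3 (fillF 𝕜 mid (δ + t/2) (a • u))
          = a • (u - flatF 𝕜 mid (δ + t/2) (bdry 𝕜 X 2 u)
              - bdry 𝕜 X 3 (fillF 𝕜 mid (δ + t/2) u)) := by
        simp only [map_smul, smul_sub]
      rw [e]; exact Submodule.smul_mem _ _ hu.1
    · rw [map_smul]; exact Submodule.smul_mem _ _ hu.2

lemma round_cycle (mid : X → X → X) (δ t : ℝ)
    (hml : ∀ u v : X, dist u (mid u v) = dist u v / 2)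
    (hmr : ∀ u v : X, dist (mid u v) v = dist u v / 2)
    (hmed : ∀ x y z : X, dist x (mid y z) ≤ δ + max (dist x y) (dist x z) - dist y z / 2)
    (hδ : 0 ≤ δ) (h2δ : 2*δ ≤ t)
    (c : (Fin 3 → X) →₀ 𝕜)
    (hc : c ∈ chainsIn 𝕜 3 (fun τ : Fin 3 → X => ∀ i j, dist (τ i) (τ j) ≤ t))
    (hcyc : bdry 𝕜 X 2 c = 0) :
    ∃ c₂ ∈ chainsIn 𝕜 3 (fun τ : Fin 3 → X => ∀ i j, dist (τ i) (τ j) ≤ δ/2 + 3*t/4),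
      bdry 𝕜 X 2 c₂ = 0 ∧
      ∃ B ∈ chainsIn 𝕜 4 (fun τ : Fin 4 → X => ∀ i j, dist (τ i) (τ j) ≤ t),
        c - c₂ = bdry 𝕜 X 3 B := by
  obtain ⟨h1, h2⟩ := round_chain mid δ t hml hmr hmed hδ h2δ c hc
  rw [hcyc, map_zero, sub_zero] at h1
  refine ⟨c - bdry 𝕜 X 3 (fillF 𝕜 mid (δ + t/2) c), h1, ?_, fillF 𝕜 mid (δ + t/2) c, h2, ?_⟩
  · rw [map_sub, hcyc, bdry_bdry, sub_zero]
  · rw [sub_sub_cancel]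

lemma iterate (mid : X → X → X) (δ : ℝ)
    (hml : ∀ u v : X, dist u (mid u v) = dist u v / 2)
    (hmr : ∀ u v : X, dist (mid u v) v = dist u v / 2)
    (hmed : ∀ x y z : X, dist x (mid y z) ≤ δ + max (dist x y) (dist x z) - dist y z / 2)
    (hδ : 0 ≤ δ) (p q : ℝ) (hp : 2*δ < p) (hpq : p < q) (n : ℕ) :
    ∀ t : ℝ, t ≤ q → 2*δ + (3/4)^n * (t - 2*δ) ≤ p →
    ∀ c ∈ chainsIn 𝕜 3 (fun τ : Fin 3 → X => ∀ i j, dist (τ i) (τ j) ≤ t),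
      bdry 𝕜 X 2 c = 0 →
    ∃ c' ∈ chainsIn 𝕜 3 (fun τ : Fin 3 → X => ∀ i j, dist (τ i) (τ j) ≤ p),
      bdry 𝕜 X 2 c' = 0 ∧
      ∃ b ∈ chainsIn 𝕜 4 (fun τ : Fin 4 → X => ∀ i j, dist (τ i) (τ j) ≤ q),
        c - c' = bdry 𝕜 X 3 b := by
  induction n with
  | zero =>
      intro t _ hbound c hc hcyc
      rw [pow_zero, one_mul] at hbound
      refine ⟨c, ?_, hcyc, 0, zero_mem _, by simp⟩
      exact chainsIn_mono _ (fun σ hσ i j => (hσ i j).trans (by linarith)) hc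
  | succ n ih =>
      intro t htq hbound c hc hcyc
      by_cases htp : t ≤ p
      · refine ⟨c, ?_, hcyc, 0, zero_mem _, by simp⟩
        exact chainsIn_mono _ (fun σ hσ i j => (hσ i j).trans htp) hc
      · push_neg at htp
        have h2δt : 2*δ ≤ t := by linarith
        obtain ⟨c₂, hc₂mem, hc₂cyc, B, hBmem, hBeq⟩ :=
          round_cycle mid δ t hml hmr hmed hδ h2δt c hc hcyc
        have ht'q : δ/2 + 3*t/4 ≤ q := by linarith
        have hb' : 2*δ + (3/4)^n * ((δ/2 + 3*t/4) - 2*δ) ≤ p := by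
          have e : (δ/2 + 3*t/4) - 2*δ = (3/4) * (t - 2*δ) := by ring
          rw [e, ← mul_assoc, ← pow_succ]
          exact hbound
        obtain ⟨c', h1, h2, b', hb'mem, hb'eq⟩ := ih (δ/2 + 3*t/4) ht'q hb' c₂ hc₂mem hc₂cyc
        refine ⟨c', h1, h2, B + b', ?_, ?_⟩
        · exact add_mem
            (chainsIn_mono _ (fun σ hσ i j => (hσ i j).trans htq) hBmem) hb'mem
        · rw [map_add, ← hBeq, ← hb'eq]; abel

end glue
end Stmt18Aux


theorem stmt18 (𝕜 : Type*) [Field 𝕜] {X : Type*} [MetricSpace X] (δ : ℝ) (hδ : 0 ≤ δ)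
    -- X is a geodesic space
    (hgeo : ∀ x y : X, ∃ g : ℝ → X, IsGeodesicFrom g x y)
    -- X is δ-hyperbolic: every geodesic triangle is δ-thin in the secant sense
    (hhyp : ∀ (x y z : X) (gxy gyz gzx : ℝ → X),
      IsGeodesicFrom gxy x y → IsGeodesicFrom gyz y z → IsGeodesicFrom gzx z x →
        (∀ t ∈ Set.Icc 0 ((dist z x + dist x y - dist y z) / 2),
            dist (gxy t) (gzx (dist z x - t)) ≤ δ) ∧
        (∀ t ∈ Set.Icc 0 ((dist x y + dist y z - dist z x) / 2),
            dist (gyz t) (gxy (dist x y - t)) ≤ δ) ∧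
        (∀ t ∈ Set.Icc 0 ((dist y z + dist z x - dist x y) / 2),
            dist (gzx t) (gyz (dist y z - t)) ≤ δ))
    (p q : ℝ) (hp : 2 * δ < p) (hpq : p < q)
    -- surjectivity of H₂(Rips(X, p)) → H₂(Rips(X, q)): every 2-cycle of
    -- Rips(X, q) is homologous in Rips(X, q) to a 2-cycle of Rips(X, p)
    (c : (Fin 3 → X) →₀ 𝕜)
    (hc : c ∈ chainsIn 𝕜 3 (fun σ : Fin 3 → X => ∀ i j, dist (σ i) (σ j) ≤ q))
    (hcyc : bdry 𝕜 X 2 c = 0) :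
    ∃ c' ∈ chainsIn 𝕜 3 (fun σ : Fin 3 → X => ∀ i j, dist (σ i) (σ j) ≤ p),
      bdry 𝕜 X 2 c' = 0 ∧
      ∃ b ∈ chainsIn 𝕜 4 (fun σ : Fin 4 → X => ∀ i j, dist (σ i) (σ j) ≤ q),
        c - c' = bdry 𝕜 X 3 b := by
  classical
  have hg : ∀ u v : X, IsGeodesicFrom (fun r => Classical.choose (hgeo u v) r) u v := by
    intro u v
    exact Classical.choose_spec (hgeo u v)
  set geod : X → X → ℝ → X := fun u v r => Classical.choose (hgeo u v) r with hgeod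
  have hml := Stmt18Aux.dist_mid_left (geod := geod) hg
  have hmr := Stmt18Aux.dist_mid_right (geod := geod) hg
  have hmed := Stmt18Aux.median (geod := geod) hg hhyp
  have hq2 : (0:ℝ) < q - 2*δ := by linarith
  obtain ⟨n, hn⟩ := exists_pow_lt_of_lt_one
    (div_pos (by linarith : (0:ℝ) < p - 2*δ) hq2) (by norm_num : (3/4:ℝ) < 1)
  rw [lt_div_iff₀ hq2] at hn
  have hbound : 2*δ + (3/4)^n * (q - 2*δ) ≤ p := by linarith
  exact Stmt18Aux.iterate (Stmt18Aux.midp geod) δ hml hmr hmed hδ p q hp hpq n q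
    le_rfl hbound c hc hcyc
end
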